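/- arXiv:math/0506157 — 7 statements merged into one kernel-verified Lean document; each statement's English description precedes it below -/
import Mathlib

section
/- Let p, q, k be positive integers with gcd(p,q)=1, gcd(p,k)=1, and 1 ≤ k < p. Define E(i) = 1 if iq mod p lies in {0,...,k-1} and 0 otherwise, s(i) = E(1)+...+E(i), and c(i) = -i·k + p·s(i). Then the polynomial F_X(t) = Σ_{i=1}^{p} t^{c(i)} (a Laurent polynomial in t) satisfies: for every p-th root of unity ζ ≠ 1, F_X(ζ) = 0. Equivalently, [p] = t^{p-1} + ... + t + 1 divides F_X(t) in the ring of Laurent polynomials over ℤ. -/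
open LaurentPolynomial

/-- `E(i) = 1` iff the residue of `i*q` modulo `p` lies in `{0,...,k-1}`. -/
def Efn (p q k i : ℕ) : ℕ := if (i * q) % p < k then 1 else 0

/-- `s(i) = E(1) + ⋯ + E(i)`. -/
def sfn (p q k i : ℕ) : ℕ := ∑ j ∈ Finset.Icc 1 i, Efn p q k j

/-- `c(i) = -i·k + p·s(i)`. -/
def cfn (p q k i : ℕ) : ℤ := -(i * k : ℤ) + p * sfn p q k i

lemma Tneg_aux (a : ℤ) : (T (-a) : LaurentPolynomial ℤ) - 1
    = -T (-a) * ((T a : LaurentPolynomial ℤ) - 1) := by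
  rw [neg_mul, mul_sub, mul_one, ← T_add, neg_add_cancel, T_zero]
  ring

lemma Tp_dvd (p : ℕ) (m : ℤ) :
    ((T p : LaurentPolynomial ℤ) - 1) ∣ (T (p * m) : LaurentPolynomial ℤ) - 1 := by
  have hnat : ∀ n : ℕ, ((T p : LaurentPolynomial ℤ) - 1) ∣ (T ((p:ℤ) * n) : LaurentPolynomial ℤ) - 1 := by
    intro n
    have : (T ((p:ℤ) * n) : LaurentPolynomial ℤ) = (T (p:ℤ)) ^ n := by
      rw [T_pow, mul_comm]
    rw [this]
    simpa using sub_dvd_pow_sub_pow (T (p:ℤ) : LaurentPolynomial ℤ) 1 n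
  rcases le_or_gt 0 m with hm | hm
  · obtain ⟨n, rfl⟩ := Int.eq_ofNat_of_zero_le hm
    exact hnat n
  · obtain ⟨n, rfl⟩ : ∃ n : ℕ, m = -(n:ℤ) := ⟨(-m).toNat, by omega⟩
    have : (p : ℤ) * -(n:ℤ) = -((p:ℤ) * n) := by ring
    rw [this, Tneg_aux]
    exact (hnat n).mul_left _

theorem stmt2 (p q k : ℕ) (hp : 0 < p) (hq : 0 < q) (hpq : Nat.Coprime p q)
    (hpk : Nat.Coprime p k) (hk : 1 ≤ k) (hkp : k < p) :
    (∀ ζ : ℂ, ζ ^ p = 1 → ζ ≠ 1 →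
      ∑ i ∈ Finset.Icc 1 p, ζ ^ (cfn p q k i) = 0) ∧
    (∑ n ∈ Finset.range p, (T (n : ℤ) : LaurentPolynomial ℤ)) ∣
      ∑ i ∈ Finset.Icc 1 p, (T (cfn p q k i) : LaurentPolynomial ℤ) := by
  have hpz : (0:ℤ) < p := by exact_mod_cast hp
  have hcop : IsCoprime (p : ℤ) (k : ℤ) := by
    rw [Nat.isCoprime_iff_coprime]; exact hpk
  have hres : ∀ i : ℕ, cfn p q k i % p = (-(i * k : ℤ)) % p := by
    intro i
    unfold cfn
    rw [Int.add_mul_emod_self_left]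
  have hinj : ∀ i ∈ Finset.Icc 1 p, ∀ j ∈ Finset.Icc 1 p,
      cfn p q k i % p = cfn p q k j % p → i = j := by
    intro i hi j hj h
    rw [hres, hres] at h
    have hd : (p : ℤ) ∣ (-(j * k : ℤ)) - (-(i * k : ℤ)) := Int.ModEq.dvd h
    have hd2 : (p : ℤ) ∣ ((i : ℤ) - j) * k := by
      have he : (-(j * k : ℤ)) - (-(i * k : ℤ)) = ((i : ℤ) - j) * k := by ring
      rwa [he] at hd
    have hd3 : (p : ℤ) ∣ ((i : ℤ) - j) := hcop.dvd_of_dvd_mul_right hd2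
    simp only [Finset.mem_Icc] at hi hj
    have : ((i : ℤ) - j) = 0 := by
      apply Int.eq_zero_of_dvd_of_natAbs_lt_natAbs hd3
      have h1 : ((i : ℤ) - j).natAbs < p := by omega
      simpa using h1
    omega
  have hIcc : Finset.Icc 1 p = Finset.image (· + 1) (Finset.range p) := by
    ext n
    simp only [Finset.mem_Icc, Finset.mem_image, Finset.mem_range]
    constructor
    · rintro ⟨h1, h2⟩; exact ⟨n - 1, by omega, by omega⟩
    · rintro ⟨a, ha, rfl⟩; omega
  constructor
  · intro ζ hζp hζ1
    have hζ0 : ζ ≠ 0 := by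
      intro h; rw [h] at hζp; simp [zero_pow hp.ne'] at hζp
    set x : ℂ := ζ ^ (-(k : ℤ)) with hx
    have hxp : x ^ p = 1 := by
      rw [hx, ← zpow_natCast (ζ ^ (-(k:ℤ))) p, ← zpow_mul]
      have : (-(k:ℤ)) * p = (p:ℤ) * (-(k:ℤ)) := by ring
      rw [this, zpow_mul, zpow_natCast, hζp, one_zpow]
    have hx1 : x ≠ 1 := by
      intro h
      have hζk : ζ ^ (k : ℤ) = 1 := by
        have := congrArg (fun z => z * ζ ^ (k:ℤ)) h
        simp only [hx, ← zpow_add₀ hζ0, neg_add_cancel, zpow_zero, one_mul] at this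
        exact this.symm
      obtain ⟨a, b, hab⟩ := hcop
      apply hζ1
      calc ζ = ζ ^ (1:ℤ) := (zpow_one ζ).symm
        _ = ζ ^ (a * p + b * k) := by rw [hab]
        _ = (ζ ^ (p:ℤ)) ^ a * (ζ ^ (k:ℤ)) ^ b := by
            rw [zpow_add₀ hζ0, mul_comm a, mul_comm b, zpow_mul, zpow_mul]
        _ = 1 := by rw [hζk, zpow_natCast, hζp]; simp
    have hterm : ∀ i : ℕ, ζ ^ (cfn p q k i) = x ^ i := by
      intro i
      unfold cfn
      rw [zpow_add₀ hζ0]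
      have h1 : ζ ^ (-(i * k : ℤ)) = x ^ i := by
        rw [hx, ← zpow_natCast (ζ ^ (-(k:ℤ))) i, ← zpow_mul]
        congr 1; ring
      have h2 : ζ ^ ((p : ℤ) * (sfn p q k i : ℤ)) = 1 := by
        rw [zpow_mul]
        norm_cast
        rw [hζp, one_pow]
      rw [h1, h2, mul_one]
    rw [Finset.sum_congr rfl (fun i _ => hterm i), hIcc,
      Finset.sum_image (by intro a _ b _ h; simp only at h; omega)]
    have : ∑ i ∈ Finset.range p, x ^ (i + 1) = x * ∑ i ∈ Finset.range p, x ^ i := by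
      rw [Finset.mul_sum]
      exact Finset.sum_congr rfl fun i _ => by rw [pow_succ]; ring
    rw [this, geom_sum_eq hx1, hxp]
    simp
  · set Φ : LaurentPolynomial ℤ := ∑ n ∈ Finset.range p, (T (n : ℤ)) with hΦ
    have hΦTp : ((T 1 : LaurentPolynomial ℤ) - 1) * Φ = T (p : ℤ) - 1 := by
      have h1 : Φ = ∑ n ∈ Finset.range p, (T (1:ℤ)) ^ n := by
        rw [hΦ]
        exact Finset.sum_congr rfl fun n _ => by rw [T_pow, mul_one]
      rw [h1, mul_comm, geom_sum_mul, T_pow, mul_one]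
    have hΦdvdTp : Φ ∣ (T (p:ℤ) : LaurentPolynomial ℤ) - 1 := Dvd.intro_left _ hΦTp
    have key : ∀ a : ℤ, Φ ∣ (T a : LaurentPolynomial ℤ) - T (a % p) := by
      intro a
      have ha : a = a % p + p * (a / p) := (Int.emod_add_mul_ediv a p).symm
      have h2 : (T a : LaurentPolynomial ℤ) - T (a % p)
          = T (a % p) * ((T ((p:ℤ) * (a / p)) : LaurentPolynomial ℤ) - 1) := by
        rw [mul_sub, mul_one, ← T_add, ← ha]
      rw [h2]
      exact Dvd.dvd.mul_left (hΦdvdTp.trans (Tp_dvd p (a / p))) _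
    have hsplit : ∑ i ∈ Finset.Icc 1 p, (T (cfn p q k i) : LaurentPolynomial ℤ)
        = (∑ i ∈ Finset.Icc 1 p, (T (cfn p q k i % p) : LaurentPolynomial ℤ))
          + ∑ i ∈ Finset.Icc 1 p, ((T (cfn p q k i) : LaurentPolynomial ℤ) - T (cfn p q k i % p)) := by
      rw [← Finset.sum_add_distrib]
      exact Finset.sum_congr rfl fun i _ => by ring
    rw [hsplit]
    apply dvd_add
    · have hmem : ∀ i, 0 ≤ cfn p q k i % p ∧ cfn p q k i % p < p :=
        fun i => ⟨Int.emod_nonneg _ hpz.ne', Int.emod_lt_of_pos _ hpz⟩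
      have himg : (Finset.Icc 1 p).image (fun i => (cfn p q k i % p).toNat)
          = Finset.range p := by
        apply Finset.eq_of_subset_of_card_le
        · intro n hn
          simp only [Finset.mem_image] at hn
          obtain ⟨i, hi, rfl⟩ := hn
          rw [Finset.mem_range]
          have := hmem i
          omega
        · rw [Finset.card_range, Finset.card_image_of_injOn, Nat.card_Icc]
          · omega
          · intro i hi j hj h
            simp only at h
            apply hinj i hi j hj
            have h1 := hmem i
            have h2 := hmem j
            omega
      have heq : ∑ i ∈ Finset.Icc 1 p, (T (cfn p q k i % p) : LaurentPolynomial ℤ)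
          = ∑ n ∈ (Finset.Icc 1 p).image (fun i => (cfn p q k i % p).toNat),
              (T (n : ℤ) : LaurentPolynomial ℤ) := by
        rw [Finset.sum_image]
        · apply Finset.sum_congr rfl
          intro i _
          congr 1
          have := hmem i
          omega
        · intro i hi j hj h
          simp only at h
          apply hinj i hi j hj
          have h1 := hmem i
          have h2 := hmem j
          omega
      rw [heq, himg]
    · exact Finset.dvd_sum fun i _ => key _
end

section
/- Let p, q, k be positive integers with gcd(p,q)=1, gcd(p,k)=1, 1 ≤ k < p. Let i_1 < ... < i_k be the indices in {1,...,p} with iq mod p ∈ {0,...,k-1}, and set c(i_j) = -i_j·k + p·j. For each j, let d(i_j) be the unique integer with 0 ≤ d(i_j) < k and d(i_j) ≡ c(i_j) - p - e (mod k), where e = min_j (c(i_j) - p). Then {d(i_1), d(i_2), ..., d(i_k)} = {0, 1, ..., k-1}. -/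
theorem stmt7 (p q k : ℕ) (hp : 0 < p) (hq : 0 < q) (hpq : Nat.Coprime p q)
    (hpk : Nat.Coprime p k) (hk : 1 ≤ k) (hkp : k < p)
    (e : ℤ)
    (he : IsLeast {x : ℤ | ∃ i ∈ (Finset.Icc 1 p).filter (fun i => Efn p q k i = 1),
        x = cfn p q k i - p} e)
    (d : ℕ → ℕ)
    (hd : ∀ i ∈ (Finset.Icc 1 p).filter (fun i => Efn p q k i = 1),
        d i < k ∧ (d i : ℤ) ≡ cfn p q k i - p - e [ZMOD (k : ℤ)]) :
    ((Finset.Icc 1 p).filter (fun i => Efn p q k i = 1)).image d = Finset.range k := by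
  set S := (Finset.Icc 1 p).filter (fun i => Efn p q k i = 1) with hS
  -- membership characterization
  have hmem : ∀ i, i ∈ S ↔ (1 ≤ i ∧ i ≤ p ∧ (i * q) % p < k) := by
    intro i
    simp only [hS, Finset.mem_filter, Finset.mem_Icc]; simp only [Efn]
    constructor
    · rintro ⟨⟨h1, h2⟩, h3⟩
      refine ⟨h1, h2, ?_⟩
      by_contra h; simp [h] at h3
    · rintro ⟨h1, h2, h3⟩
      exact ⟨⟨h1, h2⟩, by simp [h3]⟩
  -- the map f i = i*q % p is injective on Icc 1 p
  have hfinj : ∀ i ∈ Finset.Icc 1 p, ∀ i' ∈ Finset.Icc 1 p,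
      (i * q) % p = (i' * q) % p → i = i' := by
    intro i hi i' hi' h
    simp only [Finset.mem_Icc] at hi hi'
    have hmod : i * q ≡ i' * q [MOD p] := h
    have : i ≡ i' [MOD p] :=
      Nat.ModEq.cancel_right_of_coprime hpq hmod
    have hdvd : (p : ℤ) ∣ (i' : ℤ) - i := this.dvd
    have : ((i' : ℤ) - i) = 0 := by
      apply Int.eq_zero_of_abs_lt_dvd hdvd
      rw [abs_lt]; omega
    omega
  -- image of Icc 1 p under f equals range p
  have himg : (Finset.Icc 1 p).image (fun i => (i * q) % p) = Finset.range p := by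
    apply Finset.eq_of_subset_of_card_le
    · intro x hx
      simp only [Finset.mem_image] at hx
      obtain ⟨i, _, rfl⟩ := hx
      exact Finset.mem_range.2 (Nat.mod_lt _ hp)
    · rw [Finset.card_range, Finset.card_image_of_injOn hfinj, Nat.card_Icc]; omega
  -- S has cardinality k
  have hScard : S.card = k := by
    rw [← Finset.card_range k]
    apply Finset.card_bij (fun i _ => (i * q) % p)
    · intro i hi
      rw [hmem] at hi
      exact Finset.mem_range.2 hi.2.2
    · intro i hi i' hi' h
      rw [hmem] at hi hi'
      exact hfinj i (Finset.mem_Icc.2 ⟨hi.1, hi.2.1⟩) i' (Finset.mem_Icc.2 ⟨hi'.1, hi'.2.1⟩) h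
    · intro r hr
      have hrk := Finset.mem_range.1 hr
      have : r ∈ Finset.range p := Finset.mem_range.2 (lt_of_lt_of_le hrk hkp.le)
      rw [← himg, Finset.mem_image] at this
      obtain ⟨i, hi, hfi⟩ := this
      refine ⟨i, ?_, hfi⟩
      rw [hmem]
      have := Finset.mem_Icc.1 hi
      exact ⟨this.1, this.2, by rw [hfi]; exact hrk⟩
  -- s(p) = k
  have hsp : sfn p q k p = k := by
    have : sfn p q k p = S.card := by
      rw [hS, Finset.card_filter, sfn]
      apply Finset.sum_congr rfl
      intro i _
      simp only [Efn]
      by_cases h : (i * q) % p < k <;> simp [h]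
    rw [this, hScard]
  -- s is monotone
  have hsmono : ∀ i i', i ≤ i' → sfn p q k i ≤ sfn p q k i' := by
    intro i i' h
    apply Finset.sum_le_sum_of_subset
    intro x hx
    simp only [Finset.mem_Icc] at hx ⊢
    omega
  -- for i ∈ S, 1 ≤ s i
  have hs1 : ∀ i ∈ S, 1 ≤ sfn p q k i := by
    intro i hi
    rw [hS, Finset.mem_filter, Finset.mem_Icc] at hi
    calc 1 = Efn p q k i := hi.2.symm
    _ ≤ sfn p q k i := Finset.single_le_sum (f := fun j => Efn p q k j)
        (fun _ _ => Nat.zero_le _) (Finset.mem_Icc.2 ⟨hi.1.1, le_refl i⟩)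
  -- s i ≤ k for i ∈ S
  have hsk : ∀ i ∈ S, sfn p q k i ≤ k := by
    intro i hi
    rw [hS, Finset.mem_filter, Finset.mem_Icc] at hi
    exact le_trans (hsmono i p hi.1.2) (le_of_eq hsp)
  -- strict monotonicity on S
  have hstrict : ∀ i ∈ S, ∀ i' ∈ S, i < i' → sfn p q k i < sfn p q k i' := by
    intro i hi i' hi' hlt
    rw [hS, Finset.mem_filter, Finset.mem_Icc] at hi hi'
    have : sfn p q k i + Efn p q k i' ≤ sfn p q k i' := by
      unfold sfn
      have hsplit : Finset.Icc 1 i' = Finset.Icc 1 i ∪ Finset.Icc (i+1) i' := by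
        ext x; simp only [Finset.mem_union, Finset.mem_Icc]; omega
      rw [hsplit, Finset.sum_union (by
        rw [Finset.disjoint_left]; intro x hx hx'
        simp only [Finset.mem_Icc] at hx hx'; omega)]
      gcongr
      exact Finset.single_le_sum (f := fun j => Efn p q k j)
        (fun _ _ => Nat.zero_le _) (Finset.mem_Icc.2 ⟨by omega, le_refl i'⟩)
    have : Efn p q k i' = 1 := hi'.2
    omega
  -- d is injective on S
  have hdinj : Set.InjOn d S := by
    intro i hi i' hi' hdd
    have h1 := hd i hi
    have h2 := hd i' hi'
    have hc : cfn p q k i ≡ cfn p q k i' [ZMOD (k : ℤ)] := by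
      have := (h1.2.symm.trans (hdd ▸ h2.2))
      have := Int.ModEq.add_right (p + e) this
      simpa [sub_add_cancel, sub_sub, add_comm] using this
    -- deduce k ∣ p*(s i' - s i)
    have hdvd : (k : ℤ) ∣ (p : ℤ) * ((sfn p q k i' : ℤ) - sfn p q k i) := by
      have h := hc.dvd
      have : cfn p q k i' - cfn p q k i
          = (k : ℤ) * (i - i') + p * ((sfn p q k i' : ℤ) - sfn p q k i) := by
        unfold cfn; ring
      rw [this] at h
      exact (dvd_add_right ⟨(i : ℤ) - i', by ring⟩).mp h
    have hcop : IsCoprime (k : ℤ) (p : ℤ) := by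
      rw [Int.isCoprime_iff_gcd_eq_one]
      simpa [Int.gcd, Nat.Coprime, Nat.gcd_comm] using hpk
    have hdvd2 : (k : ℤ) ∣ ((sfn p q k i' : ℤ) - sfn p q k i) := hcop.dvd_of_dvd_mul_left hdvd
    have hseq : sfn p q k i = sfn p q k i' := by
      have hz : ((sfn p q k i' : ℤ) - sfn p q k i) = 0 := by
        apply Int.eq_zero_of_abs_lt_dvd hdvd2
        have a1 := hs1 i hi; have a2 := hsk i hi
        have b1 := hs1 i' hi'; have b2 := hsk i' hi'
        rw [abs_lt]
        constructor <;> [skip; skip] <;>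
          · push_cast; omega
      omega
    by_contra hne
    rcases lt_or_gt_of_ne hne with h | h
    · exact absurd hseq (Nat.ne_of_lt (hstrict i hi i' hi' h))
    · exact absurd hseq.symm (Nat.ne_of_lt (hstrict i' hi' i hi h))
  apply Finset.eq_of_subset_of_card_le
  · intro x hx
    simp only [Finset.mem_image] at hx
    obtain ⟨i, hi, rfl⟩ := hx
    exact Finset.mem_range.2 (hd i hi).1
  · rw [Finset.card_range, Finset.card_image_of_injOn (by exact_mod_cast hdinj), hScard]
end

section
/- Let p, q, k be positive integers with gcd(p,q)=1, gcd(p,k)=1, 1 ≤ k < p. With c(i) = -ik + p·s(i) as above, i_1 < ... < i_k the indices with E = 1, d = min_{1≤i≤p} c(i), and e = min_{1≤j≤k} (c(i_j) - p), one has d = e + k. -/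
lemma sfn_succ (p q k i : ℕ) : sfn p q k (i+1) = sfn p q k i + Efn p q k (i+1) := by
  unfold sfn
  rw [Finset.sum_Icc_succ_top (by omega : 1 ≤ i+1)]

lemma cfn_succ (p q k i : ℕ) :
    cfn p q k (i+1) = cfn p q k i - k + p * Efn p q k (i+1) := by
  unfold cfn
  rw [sfn_succ]
  push_cast
  ring

lemma Efn_eq_zero_or_one (p q k i : ℕ) : Efn p q k i = 0 ∨ Efn p q k i = 1 := by
  unfold Efn; split <;> simp

lemma cfn_zero (p q k : ℕ) : cfn p q k 0 = 0 := by
  unfold cfn sfn; simp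

lemma Efn_p (p q k : ℕ) (hk : 1 ≤ k) : Efn p q k p = 1 := by
  unfold Efn
  rw [Nat.mul_mod_right]
  have h0 : 0 < k := hk
  rw [if_pos h0]

lemma sfn_p_le (p q k : ℕ) (hpq : Nat.Coprime p q) (hp : 0 < p) : sfn p q k p ≤ k := by
  have h1 : sfn p q k p = ((Finset.Icc 1 p).filter (fun j => (j*q) % p < k)).card := by
    unfold sfn Efn
    rw [Finset.card_filter]
  rw [h1]
  have key : ((Finset.Icc 1 p).filter (fun j => (j*q) % p < k)).card ≤ (Finset.range k).card := by
    apply Finset.card_le_card_of_injOn (fun j => (j*q) % p)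
    · intro j hj
      simp only [Finset.coe_filter, Finset.mem_coe, Finset.mem_filter, Set.mem_setOf_eq] at hj
      simp [hj.2]
    · intro j1 hj1 j2 hj2 h
      simp only [Finset.coe_filter, Set.mem_setOf_eq, Finset.mem_Icc] at hj1 hj2
      have hm : j1 * q ≡ j2 * q [MOD p] := h
      have hm2 : j1 ≡ j2 [MOD p] := hm.cancel_right_of_coprime hpq
      rcases le_total j1 j2 with hle | hle
      · have hdvd : p ∣ j2 - j1 := (Nat.modEq_iff_dvd' hle).mp hm2
        rcases Nat.eq_zero_or_pos (j2 - j1) with h0 | h0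
        · omega
        · have := Nat.le_of_dvd h0 hdvd
          omega
      · have hdvd : p ∣ j1 - j2 := (Nat.modEq_iff_dvd' hle).mp hm2.symm
        rcases Nat.eq_zero_or_pos (j1 - j2) with h0 | h0
        · omega
        · have := Nat.le_of_dvd h0 hdvd
          omega
  simpa using key

lemma cfn_le_of_zero (p q k a : ℕ) :
    ∀ n, a ≤ n → (∀ i, a < i → i ≤ n → Efn p q k i = 0) → cfn p q k n ≤ cfn p q k a := by
  intro n
  induction n with
  | zero =>
    intro h _
    have ha : a = 0 := Nat.le_zero.mp h
    rw [ha]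
  | succ n ih =>
    intro han hE
    rcases Nat.eq_or_lt_of_le han with h | h
    · rw [h]
    · have h1 : a ≤ n := by omega
      have h2 := ih h1 (fun i hi hin => hE i hi (by omega))
      rw [cfn_succ, hE (n+1) (by omega) le_rfl]
      have : (0:ℤ) ≤ k := by positivity
      push_cast
      linarith

theorem stmt8 (p q k : ℕ) (hp : 0 < p) (hq : 0 < q) (hpq : Nat.Coprime p q)
    (hpk : Nat.Coprime p k) (hk : 1 ≤ k) (hkp : k < p)
    (d e : ℤ)
    (hd : IsLeast {x : ℤ | ∃ i ∈ Finset.Icc 1 p, x = cfn p q k i} d)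
    (he : IsLeast {x : ℤ | ∃ i ∈ (Finset.Icc 1 p).filter (fun i => Efn p q k i = 1),
        x = cfn p q k i - p} e) :
    d = e + k := by
  obtain ⟨⟨i₀, hi₀, hdi⟩, hdlb⟩ := hd
  obtain ⟨⟨m₀, hm₀, hem⟩, helb⟩ := he
  simp only [Finset.mem_filter, Finset.mem_Icc] at hm₀
  simp only [Finset.mem_Icc] at hi₀
  -- d ≤ e + k
  have hdle : d ≤ e + k := by
    rcases Nat.eq_or_lt_of_le hm₀.1.1 with h1 | h1
    · -- m₀ = 1 : e + k = cfn 0 = 0, need d ≤ 0 via cfn p ≤ 0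
      subst h1
      have hc1 : cfn p q k 1 = cfn p q k 0 - k + p * Efn p q k 1 := cfn_succ p q k 0
      rw [cfn_zero, hm₀.2] at hc1
      have hcp : cfn p q k p ≤ 0 := by
        have hs := sfn_p_le p q k hpq hp
        unfold cfn
        have : (p:ℤ) * sfn p q k p ≤ (p:ℤ) * k := by
          have : (sfn p q k p : ℤ) ≤ k := by exact_mod_cast hs
          nlinarith [Int.natCast_nonneg p]
        nlinarith
      have hdp : d ≤ cfn p q k p := hdlb ⟨p, by simp only [Finset.mem_Icc]; omega, rfl⟩
      rw [hem]
      push_cast at hc1 ⊢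
      linarith
    · -- m₀ ≥ 2 : e + k = cfn (m₀ - 1)
      have hm1 : m₀ - 1 + 1 = m₀ := by omega
      have hc : cfn p q k m₀ = cfn p q k (m₀-1) - k + p * Efn p q k m₀ := by
        conv_lhs => rw [← hm1]
        rw [cfn_succ, hm1]
      rw [hm₀.2] at hc
      have hdle' : d ≤ cfn p q k (m₀-1) :=
        hdlb ⟨m₀ - 1, by simp only [Finset.mem_Icc]; omega, rfl⟩
      rw [hem]
      push_cast at hc ⊢
      linarith
  -- e + k ≤ d
  have hele : e + k ≤ d := by
    -- least E=1 index m ≥ i₀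
    set S := (Finset.Icc i₀ p).filter (fun i => Efn p q k i = 1) with hS
    have hSne : S.Nonempty := ⟨p, by simp [hS, Finset.mem_filter, Finset.mem_Icc, hi₀.2, Efn_p p q k hk]⟩
    set m := S.min' hSne with hm
    have hmS : m ∈ S := S.min'_mem hSne
    simp only [hS, Finset.mem_filter, Finset.mem_Icc] at hmS
    have hEm : Efn p q k m = 1 := hmS.2
    have hmem : e ≤ cfn p q k m - p :=
      helb ⟨m, by simp only [Finset.mem_filter, Finset.mem_Icc]; exact ⟨⟨by omega, hmS.1.2⟩, hEm⟩, rfl⟩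
    rcases Nat.eq_or_lt_of_le hmS.1.1 with h1 | h1
    · -- m = i₀
      rw [← h1] at hmem
      rw [hdi]
      have : (k:ℤ) ≤ p := by exact_mod_cast hkp.le
      linarith
    · -- i₀ < m
      have hzero : ∀ i, i₀ < i → i ≤ m - 1 → Efn p q k i = 0 := by
        intro i hlo hhi
        rcases Efn_eq_zero_or_one p q k i with h | h
        · exact h
        · exfalso
          have hiS : i ∈ S := by
            simp only [hS, Finset.mem_filter, Finset.mem_Icc]
            exact ⟨⟨by omega, by omega⟩, h⟩
          have := S.min'_le i hiS
          omega
      have hle : cfn p q k (m-1) ≤ cfn p q k i₀ :=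
        cfn_le_of_zero p q k i₀ (m-1) (by omega) hzero
      have hm1 : m - 1 + 1 = m := by omega
      have hc : cfn p q k m = cfn p q k (m-1) - k + p * Efn p q k m := by
        conv_lhs => rw [← hm1]
        rw [cfn_succ, hm1]
      rw [hEm] at hc
      rw [hdi]
      push_cast at hc ⊢
      linarith
  omega
end

section
/- Let p, q, k be positive integers with gcd(p,q)=1, gcd(p,k)=1, 1 ≤ k < p. Define for i ∈ {0,...,k-1}: Ψ(i) the unique integer in {1,...,p} with Ψ(i)q ≡ i (mod p), and Φ(i) = #{j : 1 ≤ j ≤ k-1, Ψ(j) < Ψ(i)}. Let also i_1 < ... < i_k be the indices in {1,...,p} with i q mod p ∈ {0,...,k-1}, and c(i_j) = -i_j k + p j. Then Σ_{i=0}^{k-1} t^{Φ(i)p - Ψ(i)k} = Σ_{j=1}^{k} t^{c(i_j) - p} as Laurent polynomials; i.e., the multiset {Φ(i)p - Ψ(i)k : 0 ≤ i ≤ k-1} equals the multiset {c(i_j) - p : 1 ≤ j ≤ k}. -/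
theorem stmt9 (p q k : ℕ) (hp : 0 < p) (hq : 0 < q) (hpq : Nat.Coprime p q)
    (hpk : Nat.Coprime p k) (hk : 1 ≤ k) (hkp : k < p)
    (Ψ : ℕ → ℕ)
    (hΨ : ∀ i < k, 1 ≤ Ψ i ∧ Ψ i ≤ p ∧ Ψ i * q ≡ i [MOD p]) :
    Multiset.map
        (fun i => ((((Finset.Icc 1 (k - 1)).filter (fun j => Ψ j < Ψ i)).card : ℤ) * p
          - (Ψ i : ℤ) * k))
        (Finset.range k).val
      = Multiset.map (fun i => cfn p q k i - p)
        ((Finset.Icc 1 p).filter (fun i => Efn p q k i = 1)).val := by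
  have hΨmod : ∀ i < k, (Ψ i * q) % p = i := by
    intro i hi
    have h : (Ψ i * q) % p = i % p := (hΨ i hi).2.2
    rwa [Nat.mod_eq_of_lt (lt_trans hi hkp)] at h
  have hinj : ∀ a < k, ∀ b < k, Ψ a = Ψ b → a = b := by
    intro a ha b hb hab
    rw [← hΨmod a ha, ← hΨmod b hb, hab]
  have heq : ∀ a b : ℕ, 1 ≤ a → a ≤ p → 1 ≤ b → b ≤ p → a ≡ b [MOD p] → a = b := by
    intro a b ha1 ha2 hb1 hb2 h
    unfold Nat.ModEq at h
    rcases eq_or_lt_of_le ha2 with h1 | h1 <;> rcases eq_or_lt_of_le hb2 with h2 | h2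
    · omega
    · rw [h1, Nat.mod_self, Nat.mod_eq_of_lt h2] at h; omega
    · rw [h2, Nat.mod_self, Nat.mod_eq_of_lt h1] at h; omega
    · rw [Nat.mod_eq_of_lt h1, Nat.mod_eq_of_lt h2] at h; exact h
  have hsurj : ∀ x, 1 ≤ x → x ≤ p → (x * q) % p < k → Ψ ((x * q) % p) = x := by
    intro x hx1 hx2 hr
    have h1 := hΨ ((x * q) % p) hr
    have hmod : Ψ ((x * q) % p) * q ≡ x * q [MOD p] := by
      have h2 : x * q ≡ (x * q) % p [MOD p] := (Nat.mod_modEq (x * q) p).symm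
      exact h1.2.2.trans h2.symm
    have h3 : Ψ ((x * q) % p) ≡ x [MOD p] :=
      Nat.ModEq.cancel_right_of_coprime hpq hmod
    exact heq _ _ h1.1 h1.2.1 hx1 hx2 h3
  have hΨ0 : Ψ 0 = p := by
    have h0 := hΨ 0 (by omega)
    have hm := hΨmod 0 (by omega)
    have hdvd : p ∣ Ψ 0 * q := Nat.dvd_of_mod_eq_zero hm
    have hd : p ∣ Ψ 0 := hpq.dvd_of_dvd_mul_right hdvd
    have := Nat.le_of_dvd (by omega) hd
    omega
  have hT : (Finset.Icc 1 p).filter (fun i => Efn p q k i = 1)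
      = (Finset.range k).image Ψ := by
    ext x
    simp only [Finset.mem_filter, Finset.mem_Icc, Finset.mem_image, Finset.mem_range]
    simp only [Efn]
    constructor
    · rintro ⟨⟨hx1, hx2⟩, hE⟩
      have hlt : (x * q) % p < k := by
        by_contra h
        simp [h] at hE
      exact ⟨(x * q) % p, hlt, hsurj x hx1 hx2 hlt⟩
    · rintro ⟨j, hj, rfl⟩
      refine ⟨⟨(hΨ j hj).1, (hΨ j hj).2.1⟩, ?_⟩
      rw [hΨmod j hj]
      simp [hj]
  have hs : ∀ i < k, sfn p q k (Ψ i)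
      = ((Finset.Icc 1 (k - 1)).filter (fun j => Ψ j < Ψ i)).card + 1 := by
    intro i hi
    have h1 : sfn p q k (Ψ i)
        = ((Finset.Icc 1 (Ψ i)).filter (fun j => (j * q) % p < k)).card := by
      simp only [sfn, Efn]
      exact (Finset.card_filter _ _).symm
    have h2 : (Finset.Icc 1 (Ψ i)).filter (fun j => (j * q) % p < k)
        = ((Finset.range k).filter (fun j => Ψ j ≤ Ψ i)).image Ψ := by
      ext x
      simp only [Finset.mem_filter, Finset.mem_Icc, Finset.mem_image, Finset.mem_range]
      constructor
      · rintro ⟨⟨hx1, hx2⟩, hlt⟩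
        have hxp : x ≤ p := le_trans hx2 (hΨ i hi).2.1
        have hsx := hsurj x hx1 hxp hlt
        exact ⟨(x * q) % p, ⟨hlt, by rw [hsx]; exact hx2⟩, hsx⟩
      · rintro ⟨j, ⟨hj, hle⟩, rfl⟩
        exact ⟨⟨(hΨ j hj).1, hle⟩, by rw [hΨmod j hj]; exact hj⟩
    have h3 : (((Finset.range k).filter (fun j => Ψ j ≤ Ψ i)).image Ψ).card
        = ((Finset.range k).filter (fun j => Ψ j ≤ Ψ i)).card := by
      apply Finset.card_image_of_injOn
      intro a ha b hb hab
      simp only [Finset.coe_filter, Set.mem_setOf_eq, Finset.mem_range] at ha hb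
      exact hinj a ha.1 b hb.1 hab
    have h4 : (Finset.range k).filter (fun j => Ψ j ≤ Ψ i)
        = insert i ((Finset.Icc 1 (k - 1)).filter (fun j => Ψ j < Ψ i)) := by
      ext x
      simp only [Finset.mem_filter, Finset.mem_range, Finset.mem_insert, Finset.mem_Icc]
      constructor
      · rintro ⟨hx, hle⟩
        by_cases hxi : x = i
        · exact Or.inl hxi
        · right
          have hne : Ψ x ≠ Ψ i := fun h => hxi (hinj x hx i hi h)
          have hlt : Ψ x < Ψ i := lt_of_le_of_ne hle hne
          have hx0 : x ≠ 0 := by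
            rintro rfl
            rw [hΨ0] at hlt
            have := (hΨ i hi).2.1
            omega
          exact ⟨⟨by omega, by omega⟩, hlt⟩
      · rintro (rfl | ⟨⟨hx1, hx2⟩, hlt⟩)
        · exact ⟨hi, le_refl _⟩
        · exact ⟨by omega, le_of_lt hlt⟩
    have h5 : i ∉ (Finset.Icc 1 (k - 1)).filter (fun j => Ψ j < Ψ i) := by
      simp [Finset.mem_filter]
    rw [h1, h2, h3, h4, Finset.card_insert_of_notMem h5]
  have himg : ((Finset.Icc 1 p).filter (fun i => Efn p q k i = 1)).val
      = (Finset.range k).val.map Ψ := by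
    rw [hT]
    exact Finset.image_val_of_injOn
      (fun a ha b hb hab =>
        hinj a (by simpa using ha) b (by simpa using hb) hab)
  rw [himg, Multiset.map_map]
  apply Multiset.map_congr rfl
  intro i hi
  have hik : i < k := by simpa using hi
  simp only [Function.comp, cfn]
  rw [hs i hik]
  push_cast
  ring
end

section
/- Let p, q, k be positive integers with gcd(p,q)=1, gcd(p,k)=1, 1 ≤ k < p. Define the Laurent polynomial F_Y(t) = Σ_{j=1}^{k} t^{c(i_j) - p}, where i_1 < ... < i_k enumerate the indices i ∈ {1,...,p} with iq mod p ∈ {0,...,k-1}, and c(i_j) = -i_j k + pj. Then [k] = t^{k-1} + ... + t + 1 divides F_Y(t) in ℤ[t, t^{-1}]. -/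
open LaurentPolynomial

lemma Pk_dvd_Tk_sub_one (k : ℕ) :
    (∑ n ∈ Finset.range k, (T (n : ℤ) : LaurentPolynomial ℤ)) ∣ T (k : ℤ) - 1 := by
  refine ⟨T 1 - 1, ?_⟩
  have := geom_sum_mul (T 1 : LaurentPolynomial ℤ) k
  simpa [T_pow] using this.symm

lemma Pk_dvd_T_km (k : ℕ) : ∀ m : ℤ,
    (∑ n ∈ Finset.range k, (T (n : ℤ) : LaurentPolynomial ℤ)) ∣ T ((k : ℤ) * m) - 1 := by
  have base : ∀ m : ℕ,
      (∑ n ∈ Finset.range k, (T (n : ℤ) : LaurentPolynomial ℤ)) ∣ T ((k : ℤ) * m) - 1 := by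
    intro m
    refine (Pk_dvd_Tk_sub_one k).trans ?_
    have h := sub_dvd_pow_sub_pow (T (k : ℤ) : LaurentPolynomial ℤ) 1 m
    simpa [T_pow, mul_comm] using h
  intro m
  rcases le_or_gt 0 m with hm | hm
  · obtain ⟨n, rfl⟩ := Int.eq_ofNat_of_zero_le hm
    exact base n
  · have h := base (-m).toNat
    have hmn : ((-m).toNat : ℤ) = -m := Int.toNat_of_nonneg (by omega)
    rw [hmn] at h
    have key : (T ((k : ℤ) * m) : LaurentPolynomial ℤ) - 1 =
        -(T ((k : ℤ) * m) * (T ((k : ℤ) * -m) - 1)) := by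
      rw [mul_sub, ← T_add, mul_one,
        show (k : ℤ) * m + (k : ℤ) * -m = 0 from by ring, T_zero]
      ring
    rw [key]
    exact Dvd.dvd.neg_right (Dvd.dvd.mul_left h _)

lemma Pk_dvd_T_sub_T (k : ℕ) (a b : ℤ) (h : (k : ℤ) ∣ a - b) :
    (∑ n ∈ Finset.range k, (T (n : ℤ) : LaurentPolynomial ℤ)) ∣ T a - T b := by
  obtain ⟨m, hm⟩ := h
  have key : (T a : LaurentPolynomial ℤ) - T b = T b * (T ((k : ℤ) * m) - 1) := by
    rw [mul_sub, ← T_add, mul_one]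
    congr 2
    rw [← hm]
    ring
  rw [key]
  exact Dvd.dvd.mul_left (Pk_dvd_T_km k m) _

theorem stmt10 (p q k : ℕ) (hp : 0 < p) (hq : 0 < q) (hpq : Nat.Coprime p q)
    (hpk : Nat.Coprime p k) (hk : 1 ≤ k) (hkp : k < p) :
    (∑ n ∈ Finset.range k, (T (n : ℤ) : LaurentPolynomial ℤ)) ∣
      ∑ i ∈ (Finset.Icc 1 p).filter (fun i => Efn p q k i = 1),
        (T (cfn p q k i - p) : LaurentPolynomial ℤ) := by
  classical
  set S : Finset ℕ := (Finset.Icc 1 p).filter (fun i => Efn p q k i = 1) with hS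
  -- membership characterization
  have hSmem : ∀ i, i ∈ S ↔ (1 ≤ i ∧ i ≤ p) ∧ (i * q) % p < k := by
    intro i
    rw [hS, Finset.mem_filter, Finset.mem_Icc, Efn]
    constructor
    · rintro ⟨h1, h2⟩
      refine ⟨h1, ?_⟩
      by_contra h
      simp [h] at h2
    · rintro ⟨h1, h2⟩; exact ⟨h1, by simp [h2]⟩
  -- the residue map is injective on Icc 1 p
  have hg_inj : ∀ i ∈ Finset.Icc 1 p, ∀ j ∈ Finset.Icc 1 p,
      (i * q) % p = (j * q) % p → i = j := by
    intro i hi j hj hij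
    simp only [Finset.mem_Icc] at hi hj
    have hmod : i ≡ j [MOD p] :=
      Nat.ModEq.cancel_right_of_coprime (by simpa [Nat.coprime_comm] using hpq) hij
    have hdvd : (p : ℤ) ∣ (i : ℤ) - j := by
      have h0 := (Nat.modEq_iff_dvd (n := p) (a := i) (b := j)).mp hmod
      have h2 : (i : ℤ) - j = -((j : ℤ) - i) := by ring
      rw [h2]
      exact dvd_neg.mpr h0
    have : (i : ℤ) - j = 0 := by
      refine Int.eq_zero_of_dvd_of_natAbs_lt_natAbs hdvd ?_
      simp only [Int.natAbs_natCast]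
      omega
    omega
  -- card S = k
  have himg : (Finset.Icc 1 p).image (fun i => (i * q) % p) = Finset.range p := by
    apply Finset.eq_of_subset_of_card_le
    · intro r hr
      simp only [Finset.mem_image] at hr
      obtain ⟨i, _, rfl⟩ := hr
      simp [Nat.mod_lt _ hp]
    · rw [Finset.card_range, Finset.card_image_of_injOn hg_inj]
      simp
  have hcardS : S.card = k := by
    have h1 : S = (Finset.Icc 1 p).filter (fun i => (i * q) % p < k) := by
      ext i; rw [hSmem]; simp [Finset.mem_Icc, and_assoc]
    have h2 : ((Finset.Icc 1 p).filter (fun i => (i * q) % p < k)).image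
        (fun i => (i * q) % p) = (Finset.range p).filter (· < k) := by
      rw [← himg, Finset.filter_image]
    have h3 : (Finset.range p).filter (· < k) = Finset.range k := by
      ext n; simp only [Finset.mem_filter, Finset.mem_range]; omega
    have h4 : ((Finset.Icc 1 p).filter (fun i => (i * q) % p < k)).card =
        (((Finset.Icc 1 p).filter (fun i => (i * q) % p < k)).image
          (fun i => (i * q) % p)).card := by
      rw [Finset.card_image_of_injOn]
      exact fun i hi j hj => hg_inj i (Finset.mem_of_mem_filter i hi) j
        (Finset.mem_of_mem_filter j hj)
    rw [h1, h4, h2, h3, Finset.card_range]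
  -- sfn as a partial count; basic facts
  have hsfn_le : ∀ i, i ≤ p → sfn p q k i ≤ k := by
    intro i hip
    have hsub : Finset.Icc 1 i ⊆ Finset.Icc 1 p := Finset.Icc_subset_Icc_right hip
    have h1 : sfn p q k i ≤ sfn p q k p :=
      Finset.sum_le_sum_of_subset hsub
    have h2 : sfn p q k p = k := by
      have : sfn p q k p = ((Finset.Icc 1 p).filter (fun j => (j * q) % p < k)).card := by
        unfold sfn Efn
        simp [Finset.sum_boole]
      rw [this]
      have h1' : S = (Finset.Icc 1 p).filter (fun i => (i * q) % p < k) := by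
        ext i; rw [hSmem]; simp [Finset.mem_Icc, and_assoc]
      rw [← h1', hcardS]
    omega
  have hsfn_pos : ∀ i ∈ S, 1 ≤ sfn p q k i := by
    intro i hi
    rw [hSmem] at hi
    have hmem : i ∈ Finset.Icc 1 i := by simp [Finset.mem_Icc]; omega
    have : Efn p q k i ≤ sfn p q k i :=
      Finset.single_le_sum (f := fun j => Efn p q k j) (fun _ _ => Nat.zero_le _) hmem
    have hE : Efn p q k i = 1 := by simp [Efn, hi.2]
    omega
  -- strict monotonicity of sfn on S
  have hsfn_strict : ∀ i ∈ S, ∀ j ∈ S, i < j → sfn p q k i < sfn p q k j := by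
    intro i hi j hj hij
    have hjmem := (hSmem j).mp hj
    have hsplit : sfn p q k i + ∑ l ∈ Finset.Ioc i j, Efn p q k l = sfn p q k j := by
      unfold sfn
      rw [show Finset.Icc 1 i = Finset.Ioc 0 i from rfl,
          show Finset.Icc 1 j = Finset.Ioc 0 j from rfl]
      exact Finset.sum_Ioc_consecutive _ (Nat.zero_le i) (le_of_lt hij)
    have hjIoc : j ∈ Finset.Ioc i j := by simp [Finset.mem_Ioc]; omega
    have hle : Efn p q k j ≤ ∑ l ∈ Finset.Ioc i j, Efn p q k l :=
      Finset.single_le_sum (f := fun l => Efn p q k l) (fun _ _ => Nat.zero_le _) hjIoc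
    have hE : Efn p q k j = 1 := by simp [Efn, hjmem.2]
    omega
  have hsfn_inj : ∀ i ∈ S, ∀ j ∈ S, sfn p q k i = sfn p q k j → i = j := by
    intro i hi j hj hij
    rcases lt_trichotomy i j with h | h | h
    · exact absurd hij (ne_of_lt (hsfn_strict i hi j hj h))
    · exact h
    · exact absurd hij.symm (ne_of_lt (hsfn_strict j hj i hi h))
  -- the map f
  set f : ℕ → ℕ := fun i => (p * (sfn p q k i - 1)) % k with hf
  have hf_inj : ∀ i ∈ S, ∀ j ∈ S, f i = f j → i = j := by
    intro i hi j hj hij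
    apply hsfn_inj i hi j hj
    have hmod : p * (sfn p q k i - 1) ≡ p * (sfn p q k j - 1) [MOD k] := hij
    have hmod2 : sfn p q k i - 1 ≡ sfn p q k j - 1 [MOD k] := by
      refine Nat.ModEq.cancel_left_of_coprime ?_ hmod
      simpa [Nat.coprime_comm] using hpk
    have hib := hsfn_pos i hi
    have hjb := hsfn_pos j hj
    have hiu : sfn p q k i ≤ k := hsfn_le i (by rw [hSmem] at hi; omega)
    have hju : sfn p q k j ≤ k := hsfn_le j (by rw [hSmem] at hj; omega)
    have := hmod2
    unfold Nat.ModEq at this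
    rw [Nat.mod_eq_of_lt (by omega), Nat.mod_eq_of_lt (by omega)] at this
    omega
  have hfimg : S.image f = Finset.range k := by
    apply Finset.eq_of_subset_of_card_le
    · intro r hr
      simp only [Finset.mem_image] at hr
      obtain ⟨i, _, rfl⟩ := hr
      simp [hf, Nat.mod_lt _ (by omega : 0 < k)]
    · rw [Finset.card_range, Finset.card_image_of_injOn hf_inj, hcardS]
  -- rewrite the geometric sum as a sum over S
  have hsum : (∑ n ∈ Finset.range k, (T (n : ℤ) : LaurentPolynomial ℤ)) =
      ∑ i ∈ S, (T (f i : ℤ) : LaurentPolynomial ℤ) := by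
    rw [← hfimg, Finset.sum_image hf_inj]
  -- congruence of exponents
  have hcong : ∀ i ∈ S, (k : ℤ) ∣ (cfn p q k i - p) - (f i : ℤ) := by
    intro i hi
    have hib := hsfn_pos i hi
    have hfi : ((f i : ℕ) : ℤ) = ((p : ℤ) * ((sfn p q k i : ℤ) - 1)) % k := by
      simp only [hf]
      push_cast [Nat.cast_sub hib]
      ring_nf
    have hd : (k : ℤ) ∣ ((p : ℤ) * ((sfn p q k i : ℤ) - 1)) -
        ((p : ℤ) * ((sfn p q k i : ℤ) - 1)) % k := by
      exact Int.dvd_self_sub_of_emod_eq rfl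
    have : (cfn p q k i - p) - (f i : ℤ) =
        -((i : ℤ) * k) + (((p : ℤ) * ((sfn p q k i : ℤ) - 1)) -
          ((p : ℤ) * ((sfn p q k i : ℤ) - 1)) % k) := by
      rw [hfi]; unfold cfn; push_cast; ring
    rw [this]
    exact dvd_add ⟨-(i : ℤ), by ring⟩ hd
  -- conclude
  have hdvd_diff : (∑ n ∈ Finset.range k, (T (n : ℤ) : LaurentPolynomial ℤ)) ∣
      ∑ i ∈ S, ((T (cfn p q k i - p) : LaurentPolynomial ℤ) - T (f i : ℤ)) := by
    apply Finset.dvd_sum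
    intro i hi
    exact Pk_dvd_T_sub_T k _ _ (hcong i hi)
  have hsplit : ∑ i ∈ S, (T (cfn p q k i - p) : LaurentPolynomial ℤ) =
      (∑ i ∈ S, ((T (cfn p q k i - p) : LaurentPolynomial ℤ) - T (f i : ℤ))) +
      ∑ i ∈ S, (T (f i : ℤ) : LaurentPolynomial ℤ) := by
    rw [← Finset.sum_add_distrib]
    simp
  rw [hsplit, ← hsum]
  exact dvd_add hdvd_diff dvd_rfl
end

section
/- Let p, q, k be as usual (gcd(p,q)=1, gcd(p,k)=1, 1 ≤ k < p), with i_1 < ... < i_k the indices where iq mod p < k, c(i_j) = -i_j k + pj, e = min_j (c(i_j) - p), d(i_j) the residue of c(i_j) - p - e mod k, and m(i_j) = (c(i_j) - p - e - d(i_j))/k the multiplicity. Then the normalized polynomial G_Y(t) := t^{-e} F_Y(t) = Σ_{j=1}^k t^{d(i_j) + m(i_j)k} factors as G_Y(t) = [k]·(1 + (t-1)·Σ_{j : m(i_j) > 0} t^{d(i_j)}·[m(i_j)]^k), where [h]^n := Σ_{a=0}^{h-1} t^{an} and [k] = Σ_{a=0}^{k-1} t^a. -/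
set_option maxHeartbeats 1000000

open LaurentPolynomial

lemma geomT (n : ℕ) (c : ℤ) :
    (∑ a ∈ Finset.range n, (T ((a : ℤ) * c) : LaurentPolynomial ℤ)) * (T c - 1)
      = T ((n : ℤ) * c) - 1 := by
  induction n with
  | zero => simp
  | succ n ih =>
    rw [Finset.sum_range_succ, add_mul, ih]
    have : ((n : ℤ) + 1) * c = (n : ℤ) * c + c := by ring
    push_cast
    rw [this, T_add]
    ring

lemma Efn_eq_one_iff {p q k i : ℕ} : Efn p q k i = 1 ↔ (i * q) % p < k := by
  unfold Efn; split <;> simp_all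

lemma card_S (p q k : ℕ) (hpq : Nat.Coprime p q) (hk : 1 ≤ k) (hkp : k < p) :
    ((Finset.Icc 1 p).filter (fun i => Efn p q k i = 1)).card = k := by
  have hp1 : 1 < p := lt_of_le_of_lt hk hkp
  have : ((Finset.Icc 1 p).filter (fun i => Efn p q k i = 1)).card
      = (Finset.range k).card := by
    apply Finset.card_bij (fun i _ => (i * q) % p)
    · intro a ha
      rw [Finset.mem_filter, Efn_eq_one_iff] at ha
      exact Finset.mem_range.mpr ha.2
    · intro a ha b hb h
      rw [Finset.mem_filter, Finset.mem_Icc] at ha hb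
      have hmod : a * q ≡ b * q [MOD p] := h
      have hab : a ≡ b [MOD p] := Nat.ModEq.cancel_right_of_coprime hpq hmod
      obtain ⟨t, ht⟩ := hab.dvd
      have hb1 : (1 : ℤ) ≤ b := by exact_mod_cast hb.1.1
      have hb2 : (b : ℤ) ≤ p := by exact_mod_cast hb.1.2
      have ha1 : (1 : ℤ) ≤ a := by exact_mod_cast ha.1.1
      have ha2 : (a : ℤ) ≤ p := by exact_mod_cast ha.1.2
      have ht0 : t = 0 := by
        rcases lt_trichotomy t 0 with h' | h' | h'
        · nlinarith
        · exact h'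
        · nlinarith
      rw [ht0, mul_zero, sub_eq_zero] at ht
      exact_mod_cast ht.symm
    · intro b hb
      rw [Finset.mem_range] at hb
      obtain ⟨q', -, hq'⟩ := Nat.exists_mul_mod_eq_one_of_coprime
        (Nat.coprime_comm.mp hpq) hp1
      set i0 := (b * q') % p with hi0
      have hi0p : i0 < p := Nat.mod_lt _ (by omega)
      set i := if i0 = 0 then p else i0 with hi
      have him : i % p = i0 := by
        rw [hi]; split
        · simp_all [Nat.mod_self]
        · exact Nat.mod_eq_of_lt hi0p
      have hqq' : q * q' ≡ 1 [MOD p] := by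
        unfold Nat.ModEq; rw [hq', Nat.mod_eq_of_lt hp1]
      have h1 : i ≡ b * q' [MOD p] := by
        unfold Nat.ModEq; rw [him]
      have h2 : i * q ≡ b [MOD p] := by
        calc i * q ≡ b * q' * q [MOD p] := h1.mul_right q
          _ = b * (q * q') := by ring
          _ ≡ b * 1 [MOD p] := hqq'.mul_left b
          _ = b := by ring
      have hval : i * q % p = b := by
        have := h2; unfold Nat.ModEq at this
        rwa [Nat.mod_eq_of_lt (show b < p by omega)] at this
      refine ⟨i, ?_, hval⟩
      rw [Finset.mem_filter, Finset.mem_Icc, Efn_eq_one_iff, hval]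
      refine ⟨⟨?_, ?_⟩, hb⟩ <;> rw [hi] <;> split <;> omega
  simpa using this

lemma sfn_lt_sfn (p q k : ℕ) {i i' : ℕ} (hii : i < i') (hE : Efn p q k i' = 1) :
    sfn p q k i < sfn p q k i' := by
  unfold sfn
  rw [show (1:ℕ) = 0 + 1 from rfl, Finset.Icc_add_one_left_eq_Ioc, Finset.Icc_add_one_left_eq_Ioc,
    ← Finset.sum_Ioc_consecutive _ (Nat.zero_le i) (le_of_lt hii)]
  have h1 : Efn p q k i' ≤ ∑ j ∈ Finset.Ioc i i', Efn p q k j :=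
    Finset.single_le_sum (fun j _ => Nat.zero_le _) (Finset.mem_Ioc.mpr ⟨hii, le_refl _⟩)
  omega

lemma sfn_le (p q k : ℕ) {i i' : ℕ} (h : i ≤ i') : sfn p q k i ≤ sfn p q k i' :=
  Finset.sum_le_sum_of_subset (Finset.Icc_subset_Icc_right h)

lemma sfn_top (p q k : ℕ) :
    sfn p q k p = ((Finset.Icc 1 p).filter (fun i => Efn p q k i = 1)).card := by
  unfold sfn
  rw [Finset.filter_congr (fun i _ => by rw [Efn_eq_one_iff]), Finset.card_filter]
  apply Finset.sum_congr rfl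
  intro i _
  unfold Efn
  split <;> simp

lemma sfn_ge_one (p q k : ℕ) {i : ℕ} (h1 : 1 ≤ i) (hE : Efn p q k i = 1) :
    1 ≤ sfn p q k i := by
  unfold sfn
  calc 1 = Efn p q k i := hE.symm
    _ ≤ _ := Finset.single_le_sum (fun j _ => Nat.zero_le _)
        (Finset.mem_Icc.mpr ⟨h1, le_refl _⟩)

theorem stmt11 (p q k : ℕ) (hp : 0 < p) (hq : 0 < q) (hpq : Nat.Coprime p q)
    (hpk : Nat.Coprime p k) (hk : 1 ≤ k) (hkp : k < p)
    (e : ℤ)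
    (he : IsLeast {x : ℤ | ∃ i ∈ (Finset.Icc 1 p).filter (fun i => Efn p q k i = 1),
        x = cfn p q k i - p} e)
    (d m : ℕ → ℕ)
    (hdm : ∀ i ∈ (Finset.Icc 1 p).filter (fun i => Efn p q k i = 1),
        d i < k ∧ cfn p q k i - p - e = d i + m i * k) :
    ∑ i ∈ (Finset.Icc 1 p).filter (fun i => Efn p q k i = 1),
        (T (cfn p q k i - p - e) : LaurentPolynomial ℤ)
      = (∑ a ∈ Finset.range k, (T (a : ℤ) : LaurentPolynomial ℤ)) *
        (1 + (T 1 - 1) *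
          ∑ i ∈ ((Finset.Icc 1 p).filter (fun i => Efn p q k i = 1)).filter
              (fun i => 0 < m i),
            T (d i : ℤ) * ∑ a ∈ Finset.range (m i), T ((a * k : ℕ) : ℤ)) := by
  classical
  set S := (Finset.Icc 1 p).filter (fun i => Efn p q k i = 1) with hS
  have hcard : S.card = k := card_S p q k hpq hk hkp
  -- bounds on sfn on S
  have hsb : ∀ i ∈ S, 1 ≤ sfn p q k i ∧ sfn p q k i ≤ k := by
    intro i hi
    rw [hS, Finset.mem_filter, Finset.mem_Icc] at hi
    refine ⟨sfn_ge_one p q k hi.1.1 hi.2, ?_⟩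
    calc sfn p q k i ≤ sfn p q k p := sfn_le p q k hi.1.2
      _ = S.card := sfn_top p q k
      _ = k := hcard
  -- injectivity of sfn on S
  have hsinj : ∀ i ∈ S, ∀ j ∈ S, sfn p q k i = sfn p q k j → i = j := by
    intro i hi j hj hij
    rcases lt_trichotomy i j with h | h | h
    · have := sfn_lt_sfn p q k h (by rw [hS, Finset.mem_filter] at hj; exact hj.2)
      omega
    · exact h
    · have := sfn_lt_sfn p q k h (by rw [hS, Finset.mem_filter] at hi; exact hi.2)
      omega
  -- injectivity of d on S
  have hdinj : ∀ i ∈ S, ∀ j ∈ S, d i = d j → i = j := by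
    intro i hi j hj hij
    obtain ⟨hd1, hc1⟩ := hdm i hi
    obtain ⟨hd2, hc2⟩ := hdm j hj
    have hd' : ((d i : ℤ)) = (d j : ℤ) := by exact_mod_cast hij
    have key : (k : ℤ) ∣ (p : ℤ) * ((sfn p q k i : ℤ) - (sfn p q k j : ℤ)) := by
      refine ⟨(m i : ℤ) - m j + i - j, ?_⟩
      simp only [cfn] at hc1 hc2
      linear_combination hc1 - hc2 + hd'
    have hcop : IsCoprime (k : ℤ) (p : ℤ) := Nat.isCoprime_iff_coprime.mpr hpk.symm
    obtain ⟨t, ht⟩ := hcop.dvd_of_dvd_mul_left key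
    obtain ⟨hi1, hi2⟩ := hsb i hi
    obtain ⟨hj1, hj2⟩ := hsb j hj
    have hi1' : (1:ℤ) ≤ sfn p q k i := by exact_mod_cast hi1
    have hi2' : (sfn p q k i : ℤ) ≤ k := by exact_mod_cast hi2
    have hj1' : (1:ℤ) ≤ sfn p q k j := by exact_mod_cast hj1
    have hj2' : (sfn p q k j : ℤ) ≤ k := by exact_mod_cast hj2
    have hk' : (1:ℤ) ≤ k := by exact_mod_cast hk
    have hklhs1 : (k:ℤ) * t < k * 1 := by linarith
    have hklhs2 : (k:ℤ) * (-1) < k * t := by linarith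
    have hkpos : (0:ℤ) ≤ k := by linarith
    have h1 : t < 1 := lt_of_mul_lt_mul_left hklhs1 hkpos
    have h2 : -1 < t := lt_of_mul_lt_mul_left hklhs2 hkpos
    have ht0 : t = 0 := by omega
    rw [ht0, mul_zero, sub_eq_zero] at ht
    exact hsinj i hi j hj (by exact_mod_cast ht)
  -- image of d is range k
  have himg : S.image d = Finset.range k := by
    apply Finset.eq_of_subset_of_card_le
    · intro x hx
      obtain ⟨i, hi, rfl⟩ := Finset.mem_image.mp hx
      exact Finset.mem_range.mpr (hdm i hi).1
    · rw [Finset.card_range, Finset.card_image_of_injOn (fun i hi j hj => hdinj i hi j hj),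
        hcard]
  -- sum of T (d i) over S equals the full geometric sum
  have hsumd : ∑ i ∈ S, (T (d i : ℤ) : LaurentPolynomial ℤ)
      = ∑ a ∈ Finset.range k, (T (a : ℤ) : LaurentPolynomial ℤ) := by
    rw [← himg, Finset.sum_image (fun i hi j hj => hdinj i hi j hj)]
  set K := ∑ a ∈ Finset.range k, (T (a : ℤ) : LaurentPolynomial ℤ) with hKdef
  have hK1 : K * (T 1 - 1) = T (k : ℤ) - 1 := by
    have := geomT k 1
    simpa using this
  have hgeom : ∀ n : ℕ,
      (∑ a ∈ Finset.range n, (T ((a * k : ℕ) : ℤ) : LaurentPolynomial ℤ)) * (T (k:ℤ) - 1)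
        = T ((n * k : ℕ) : ℤ) - 1 := by
    intro n
    push_cast
    exact geomT n k
  calc ∑ i ∈ S, (T (cfn p q k i - p - e) : LaurentPolynomial ℤ)
      = ∑ i ∈ S, (T (d i : ℤ) : LaurentPolynomial ℤ) * T ((m i * k : ℕ) : ℤ) := by
        refine Finset.sum_congr rfl fun i hi => ?_
        rw [(hdm i hi).2, ← T_add]
        exact congrArg T (by push_cast; ring)
    _ = K * (1 + (T 1 - 1) * ∑ i ∈ S.filter (fun i => 0 < m i),
          T (d i : ℤ) * ∑ a ∈ Finset.range (m i), T ((a * k : ℕ) : ℤ)) := by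
        rw [mul_add, mul_one, ← mul_assoc, hK1, Finset.mul_sum]
        have step : ∀ i ∈ S.filter (fun i => 0 < m i),
            (T (k:ℤ) - 1) * (T (d i : ℤ) * ∑ a ∈ Finset.range (m i),
              (T ((a * k : ℕ) : ℤ) : LaurentPolynomial ℤ))
            = T (d i : ℤ) * (T ((m i * k : ℕ) : ℤ) - 1) := by
          intro i _
          rw [mul_comm (T (k:ℤ) - 1), mul_assoc, hgeom (m i)]
        rw [Finset.sum_congr rfl step]
        have hfilt : ∑ i ∈ S.filter (fun i => 0 < m i),
            (T (d i : ℤ) * (T ((m i * k : ℕ) : ℤ) - 1) : LaurentPolynomial ℤ)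
            = ∑ i ∈ S, (T (d i : ℤ) * (T ((m i * k : ℕ) : ℤ) - 1) : LaurentPolynomial ℤ) := by
          apply Finset.sum_filter_of_ne
          intro i _ hne
          by_contra hmi
          apply hne
          have h0 : m i = 0 := by omega
          simp [h0]
        rw [hfilt]
        have expand : ∀ i ∈ S, (T (d i : ℤ) : LaurentPolynomial ℤ) *
            (T ((m i * k : ℕ) : ℤ) - 1)
            = T (d i : ℤ) * T ((m i * k : ℕ) : ℤ) - T (d i : ℤ) := by
          intro i _; ring
        rw [Finset.sum_congr rfl expand, Finset.sum_sub_distrib, hsumd]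
        ring
end

section
/- Let 𝒰 and 𝒱 be finite sets of nonnegative integers with 𝒱 = {u + 1 : u ∈ 𝒰} (so 𝒱 is the shift of 𝒰 by 1). Suppose 0 ∉ 𝒰. Then the elements of the symmetric difference (𝒰 ∪ 𝒱) \ (𝒰 ∩ 𝒱), listed in increasing order, alternate between elements of 𝒰 and elements of 𝒱, beginning with an element of 𝒰 \ 𝒱 and ending with an element of 𝒱 \ 𝒰. In particular, the symmetric difference has even cardinality 2m and can be written as u_1 < v_1 < u_2 < v_2 < ... < u_m < v_m with u_i ∈ 𝒰 \ 𝒱 and v_i ∈ 𝒱 \ 𝒰. -/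
theorem stmt13 (U : Finset ℕ) (hU0 : 0 ∉ U) (V : Finset ℕ)
    (hV : V = U.image (fun u => u + 1)) :
    ∃ m : ℕ, ∃ u v : ℕ → ℕ,
      (∀ i < m, u i ∈ U \ V ∧ v i ∈ V \ U) ∧
      (∀ i < m, u i < v i) ∧
      (∀ i, i + 1 < m → v i < u (i + 1)) ∧
      (U ∪ V) \ (U ∩ V) =
        (Finset.range m).image u ∪ (Finset.range m).image v := by
  subst hV
  revert hU0
  induction U using Finset.strongInduction with
  | _ U ih =>
    intro hU0
    rcases eq_or_ne U ∅ with rfl | hne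
    · exact ⟨0, id, id, by simp, by simp, by simp, by simp⟩
    have hUne : U.Nonempty := Finset.nonempty_iff_ne_empty.2 hne
    set a := U.min' hUne with ha_def
    have haU : a ∈ U := U.min'_mem hUne
    have hamin : ∀ x ∈ U, a ≤ x := fun x hx => U.min'_le x hx
    have ha1 : 1 ≤ a := by
      rcases Nat.eq_zero_or_pos a with h | h
      · exact absurd (h ▸ haU) hU0
      · exact h
    have hex : ∃ k, a + k + 1 ∉ U := by
      refine ⟨U.max' hUne, fun h => ?_⟩
      have := U.le_max' _ h
      omega
    set k := Nat.find hex with hk_def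
    set b := a + k with hb_def
    have hb1 : b + 1 ∉ U := Nat.find_spec hex
    have hIcc : ∀ x, a ≤ x → x ≤ b → x ∈ U := by
      intro x hax hxb
      obtain ⟨j, rfl⟩ : ∃ j, x = a + j := ⟨x - a, by omega⟩
      cases j with
      | zero => simpa using haU
      | succ j' =>
        have hj' : j' < k := by omega
        have := Nat.find_min hex hj'
        simpa [Nat.add_assoc] using not_not.mp this
    set U' := U \ Finset.Icc a b with hU'_def
    have hU'ss : U' ⊂ U := by
      refine Finset.ssubset_iff_of_subset (Finset.sdiff_subset) |>.2 ⟨a, haU, ?_⟩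
      simp [hU'_def]
      intro _; omega
    have h0U' : 0 ∉ U' := fun h => hU0 (Finset.sdiff_subset h)
    have hU'big : ∀ x ∈ U', b + 2 ≤ x := by
      intro x hx
      simp only [hU'_def, Finset.mem_sdiff, Finset.mem_Icc, not_and, not_le] at hx
      have h1 := hamin x hx.1
      have h2 := hx.2
      have h3 : x ≠ b + 1 := fun h => hb1 (h ▸ hx.1)
      omega
    obtain ⟨m', u', v', h1, h2, h3, h4⟩ := ih U' hU'ss h0U'
    -- membership splitting lemmas
    have hUlow : ∀ x, x ≤ b + 1 → (x ∈ U ↔ a ≤ x ∧ x ≤ b) := by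
      intro x hx
      constructor
      · intro hxU
        have := hamin x hxU
        have : x ≠ b + 1 := fun h => hb1 (h ▸ hxU)
        omega
      · intro ⟨h1', h2'⟩; exact hIcc x h1' h2'
    have hUhi : ∀ x, b + 2 ≤ x → (x ∈ U ↔ x ∈ U') := by
      intro x hx
      simp only [hU'_def, Finset.mem_sdiff, Finset.mem_Icc]
      constructor
      · intro hxU; exact ⟨hxU, by omega⟩
      · intro h; exact h.1
    have hVlow : ∀ x, x ≤ b + 1 →
        (x ∈ U.image (fun u => u + 1) ↔ a + 1 ≤ x ∧ x ≤ b + 1) := by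
      intro x hx
      simp only [Finset.mem_image]
      constructor
      · rintro ⟨y, hy, hxy⟩
        have h1' := hamin y hy
        have h2' := (hUlow y (by omega)).1 hy
        omega
      · intro ⟨h1', h2'⟩
        exact ⟨x - 1, hIcc (x - 1) (by omega) (by omega), by omega⟩
    have hVhi : ∀ x, b + 2 ≤ x →
        (x ∈ U.image (fun u => u + 1) ↔ x ∈ U'.image (fun u => u + 1)) := by
      intro x hx
      simp only [Finset.mem_image]
      constructor
      · rintro ⟨y, hy, hxy⟩
        have hyb : y ≠ b + 1 := fun h => hb1 (h ▸ hy)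
        exact ⟨y, (hUhi y (by omega)).1 hy, hxy⟩
      · rintro ⟨y, hy, hxy⟩
        exact ⟨y, Finset.sdiff_subset hy, hxy⟩
    have hS'big : ∀ x ∈ (U' ∪ U'.image (fun u => u + 1)) \ (U' ∩ U'.image (fun u => u + 1)),
        b + 2 ≤ x := by
      intro x hx
      rw [Finset.mem_sdiff, Finset.mem_union] at hx
      rcases hx.1 with h | h
      · exact hU'big x h
      · simp only [Finset.mem_image] at h
        obtain ⟨y, hy, hxy⟩ := h
        have := hU'big y hy
        omega
    refine ⟨m' + 1, fun i => Nat.casesOn i a u', fun i => Nat.casesOn i (b + 1) v',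
            ?_, ?_, ?_, ?_⟩
    · intro i hi
      match i with
      | 0 =>
        refine ⟨Finset.mem_sdiff.2 ⟨haU, ?_⟩, Finset.mem_sdiff.2 ⟨?_, hb1⟩⟩
        · show a ∉ _
          rw [hVlow a (by omega)]; omega
        · exact Finset.mem_image.2 ⟨b, hIcc b (by omega) le_rfl, rfl⟩
      | j + 1 =>
        obtain ⟨hu', hv'⟩ := h1 j (by omega)
        rw [Finset.mem_sdiff] at hu' hv'
        have hub : b + 2 ≤ u' j := hU'big _ hu'.1
        have hvb : b + 2 ≤ v' j := by
          obtain ⟨y, hy, hyy⟩ := Finset.mem_image.1 hv'.1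
          have := hU'big y hy
          omega
        constructor
        · refine Finset.mem_sdiff.2 ⟨Finset.sdiff_subset hu'.1, ?_⟩
          show u' j ∉ _
          rw [hVhi _ hub]; exact hu'.2
        · refine Finset.mem_sdiff.2 ⟨?_, ?_⟩
          · show v' j ∈ _
            rw [hVhi _ hvb]; exact hv'.1
          · show v' j ∉ _
            rw [hUhi _ hvb]; exact hv'.2
    · intro i hi
      match i with
      | 0 => show a < b + 1; omega
      | j + 1 => exact h2 j (by omega)
    · intro i hi
      match i with
      | 0 =>
        show b + 1 < u' 0
        have := (h1 0 (by omega)).1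
        rw [Finset.mem_sdiff] at this
        exact hU'big _ this.1
      | j + 1 => exact h3 j (by omega)
    · -- set equality
      have hS : (U ∪ U.image (fun u => u + 1)) \ (U ∩ U.image (fun u => u + 1)) =
          insert a (insert (b + 1)
            ((U' ∪ U'.image (fun u => u + 1)) \ (U' ∩ U'.image (fun u => u + 1)))) := by
        ext x
        simp only [Finset.mem_sdiff, Finset.mem_union, Finset.mem_inter, Finset.mem_insert]
        rcases le_or_gt x (b + 1) with hx | hx
        · rw [hUlow x hx, hVlow x hx]
          have hxS' : ¬((x ∈ U' ∨ x ∈ U'.image (fun u => u + 1)) ∧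
              ¬(x ∈ U' ∧ x ∈ U'.image (fun u => u + 1))) := by
            intro h
            have hmem : x ∈ (U' ∪ U'.image (fun u => u + 1)) \
                (U' ∩ U'.image (fun u => u + 1)) := by
              simp only [Finset.mem_sdiff, Finset.mem_union, Finset.mem_inter]
              exact h
            have := hS'big x hmem
            omega
          constructor
          · intro ⟨hor, hand⟩
            have : x = a ∨ x = b + 1 := by omega
            tauto
          · rintro (rfl | rfl | h)
            · constructor
              · left; omega
              · intro ⟨_, h2'⟩; omega
            · constructor
              · right; omega
              · intro ⟨h1', _⟩; omega
            · exact absurd h hxS'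
        · rw [hUhi x (by omega), hVhi x (by omega)]
          have hxa : x ≠ a := by omega
          have hxb : x ≠ b + 1 := by omega
          tauto
      rw [hS, h4]
      ext x
      simp only [Finset.mem_insert, Finset.mem_union, Finset.mem_image, Finset.mem_range]
      constructor
      · rintro (rfl | rfl | ⟨i, hi, rfl⟩ | ⟨i, hi, rfl⟩)
        · exact Or.inl ⟨0, by omega, rfl⟩
        · exact Or.inr ⟨0, by omega, rfl⟩
        · exact Or.inl ⟨i + 1, by omega, rfl⟩
        · exact Or.inr ⟨i + 1, by omega, rfl⟩
      · rintro (⟨i, hi, rfl⟩ | ⟨i, hi, rfl⟩)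
        · match i with
          | 0 => left; rfl
          | j + 1 => right; right; left; exact ⟨j, by omega, rfl⟩
        · match i with
          | 0 => right; left; rfl
          | j + 1 => right; right; right; exact ⟨j, by omega, rfl⟩
end
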